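/- Let N ≥ 1 and let p: ℝ^N → (1,∞) be measurable with 1 < p⁻ ≤ p(x) ≤ p⁺ < ∞ for a.e. x. Let u, g be measurable functions on ℝ^N and let φ be a measurable function with φ(x) > 0 for a.e. x. Set X = ∫_{ℝ^N} |u(x)|^{p(x)} φ(x) dx, F⁺ = ∫_{ℝ^N} φ(x)^{−1/(p⁺−1)} |g(x)|^{p⁺/(p⁺−1)} dx, and F⁻ = ∫_{ℝ^N} φ(x)^{−1/(p⁻−1)} |g(x)|^{p⁻/(p⁻−1)} dx. Then ∫_{ℝ^N} |u(x)||g(x)| dx ≤ (F⁺)^{(p⁺−1)/p⁺} X^{1/p⁺} + (F⁻)^{(p⁻−1)/p⁻} X^{1/p⁻}, where the inequality is understood in the extended reals [0,∞]. -/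

import Mathlib

open MeasureTheory

lemma holder_aux {α : Type*} [MeasurableSpace α] (μ : Measure α)
    (u g φ pf : α → ℝ) (hu : Measurable u) (hg : Measurable g) (hφ : Measurable φ)
    (hφpos : ∀ᵐ x ∂μ, 0 < φ x)
    (r : ℝ) (hr : 1 < r) {S : Set α} (hS : MeasurableSet S)
    (hbd : ∀ᵐ x ∂μ, x ∈ S → |u x| ^ r ≤ |u x| ^ pf x) :
    ∫⁻ x in S, ENNReal.ofReal (|u x| * |g x|) ∂μ ≤
      (∫⁻ x, ENNReal.ofReal (φ x ^ (-1 / (r - 1)) * |g x| ^ (r / (r - 1))) ∂μ) ^ ((r - 1) / r) *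
      (∫⁻ x, ENNReal.ofReal (|u x| ^ pf x * φ x) ∂μ) ^ (1 / r) := by
  have hr0 : (0:ℝ) < r := by linarith
  have hrne : r ≠ 0 := hr0.ne'
  have hr1 : r - 1 ≠ 0 := sub_ne_zero.2 hr.ne'
  set r' : ℝ := r / (r - 1) with hr'
  have hconj : r.HolderConjugate r' := Real.HolderConjugate.conjExponent hr
  have hr'0 : (0:ℝ) < r' := hconj.symm.pos
  set F : α → ENNReal := fun x => ENNReal.ofReal (|u x| * φ x ^ (1 / r)) with hF
  set H : α → ENNReal := fun x => ENNReal.ofReal (|g x| * φ x ^ (-(1 / r))) with hH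
  have hFm : Measurable F := (hu.abs.mul (hφ.pow measurable_const)).ennreal_ofReal
  have hHm : Measurable H := (hg.abs.mul (hφ.pow measurable_const)).ennreal_ofReal
  have step1 : ∫⁻ x in S, ENNReal.ofReal (|u x| * |g x|) ∂μ = ∫⁻ x in S, F x * H x ∂μ := by
    refine lintegral_congr_ae ?_
    filter_upwards [ae_restrict_of_ae hφpos] with x hx
    have h1 : φ x ^ (1 / r) * φ x ^ (-(1 / r)) = 1 := by
      rw [← Real.rpow_add hx]; simp
    rw [hF, hH]
    simp only
    rw [← ENNReal.ofReal_mul (by positivity)]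
    congr 1
    calc |u x| * |g x| = |u x| * |g x| * (φ x ^ (1 / r) * φ x ^ (-(1 / r))) := by
          rw [h1, mul_one]
      _ = |u x| * φ x ^ (1 / r) * (|g x| * φ x ^ (-(1 / r))) := by ring
  have step2 : ∫⁻ x in S, F x * H x ∂μ ≤
      (∫⁻ x in S, F x ^ r ∂μ) ^ (1 / r) * (∫⁻ x in S, H x ^ r' ∂μ) ^ (1 / r') :=
    ENNReal.lintegral_mul_le_Lp_mul_Lq _ hconj hFm.aemeasurable hHm.aemeasurable
  have step3 : ∫⁻ x in S, F x ^ r ∂μ ≤ ∫⁻ x, ENNReal.ofReal (|u x| ^ pf x * φ x) ∂μ := by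
    refine le_trans ?_ (setLIntegral_le_lintegral S _)
    refine lintegral_mono_ae ?_
    filter_upwards [ae_restrict_of_ae hφpos, ae_restrict_of_ae hbd,
      (ae_restrict_iff' hS).2 (Filter.Eventually.of_forall fun x hx => hx)] with x hx hbx hxS
    have hbd' := hbx hxS
    have key : (|u x| * φ x ^ (1 / r)) ^ r = |u x| ^ r * φ x := by
      rw [Real.mul_rpow (abs_nonneg _) (Real.rpow_nonneg hx.le _),
        ← Real.rpow_mul hx.le, one_div_mul_cancel hrne, Real.rpow_one]
    rw [hF]
    simp only
    rw [ENNReal.ofReal_rpow_of_nonneg (by positivity) hr0.le, key]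
    exact ENNReal.ofReal_le_ofReal (mul_le_mul_of_nonneg_right hbd' hx.le)
  have step4 : ∫⁻ x in S, H x ^ r' ∂μ ≤
      ∫⁻ x, ENNReal.ofReal (φ x ^ (-1 / (r - 1)) * |g x| ^ (r / (r - 1))) ∂μ := by
    refine le_trans ?_ (setLIntegral_le_lintegral S _)
    refine lintegral_mono_ae ?_
    filter_upwards [ae_restrict_of_ae hφpos] with x hx
    have hexp : -(1 / r) * r' = -1 / (r - 1) := by
      rw [hr', neg_mul, neg_div, neg_inj, div_mul_div_comm, one_mul,
        div_mul_cancel_left₀ hrne, one_div]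
    have key : (|g x| * φ x ^ (-(1 / r))) ^ r' = φ x ^ (-1 / (r - 1)) * |g x| ^ (r / (r - 1)) := by
      rw [Real.mul_rpow (abs_nonneg _) (Real.rpow_nonneg hx.le _),
        ← Real.rpow_mul hx.le, hexp, mul_comm, hr']
    rw [hH]
    simp only
    rw [ENNReal.ofReal_rpow_of_nonneg (by positivity) hr'0.le, key]
  have hinv : 1 / r' = (r - 1) / r := by rw [hr']; rw [one_div_div]
  calc ∫⁻ x in S, ENNReal.ofReal (|u x| * |g x|) ∂μ
      = ∫⁻ x in S, F x * H x ∂μ := step1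
    _ ≤ (∫⁻ x in S, F x ^ r ∂μ) ^ (1 / r) * (∫⁻ x in S, H x ^ r' ∂μ) ^ (1 / r') := step2
    _ ≤ (∫⁻ x, ENNReal.ofReal (|u x| ^ pf x * φ x) ∂μ) ^ (1 / r) *
        (∫⁻ x, ENNReal.ofReal (φ x ^ (-1 / (r - 1)) * |g x| ^ (r / (r - 1))) ∂μ) ^ ((r - 1) / r) := by
        rw [← hinv]
        exact mul_le_mul' (ENNReal.rpow_le_rpow step3 (by positivity))
          (ENNReal.rpow_le_rpow step4 (by positivity))
    _ = _ := mul_comm _ _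

/-- Hölder-splitting inequality in extended reals: with
`X = ∫ |u|^{p(x)} φ`, `F⁺ = ∫ φ^{-1/(p⁺-1)} |g|^{p⁺/(p⁺-1)}`,
`F⁻ = ∫ φ^{-1/(p⁻-1)} |g|^{p⁻/(p⁻-1)}`, one has
`∫ |u||g| ≤ (F⁺)^{(p⁺-1)/p⁺} X^{1/p⁺} + (F⁻)^{(p⁻-1)/p⁻} X^{1/p⁻}`. -/
theorem holder_splitting
    (N : ℕ) (hN : 1 ≤ N)
    (p : EuclideanSpace ℝ (Fin N) → ℝ) (hpmeas : Measurable p)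
    (pminus pplus : ℝ) (hp1 : 1 < pminus)
    (hpbd : ∀ᵐ x : EuclideanSpace ℝ (Fin N) ∂(volume : Measure (EuclideanSpace ℝ (Fin N))),
      pminus ≤ p x ∧ p x ≤ pplus)
    (u g φ : EuclideanSpace ℝ (Fin N) → ℝ)
    (hu : Measurable u) (hg : Measurable g) (hφ : Measurable φ)
    (hφpos : ∀ᵐ x : EuclideanSpace ℝ (Fin N) ∂(volume : Measure (EuclideanSpace ℝ (Fin N))),
      0 < φ x) :
    (∫⁻ x : EuclideanSpace ℝ (Fin N), ENNReal.ofReal (|u x| * |g x|)) ≤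
      (∫⁻ x : EuclideanSpace ℝ (Fin N), ENNReal.ofReal
          (φ x ^ (-1 / (pplus - 1)) * |g x| ^ (pplus / (pplus - 1)))) ^ ((pplus - 1) / pplus) *
        (∫⁻ x : EuclideanSpace ℝ (Fin N),
          ENNReal.ofReal (|u x| ^ (p x) * φ x)) ^ (1 / pplus) +
      (∫⁻ x : EuclideanSpace ℝ (Fin N), ENNReal.ofReal
          (φ x ^ (-1 / (pminus - 1)) * |g x| ^ (pminus / (pminus - 1)))) ^ ((pminus - 1) / pminus) *
        (∫⁻ x : EuclideanSpace ℝ (Fin N),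
          ENNReal.ofReal (|u x| ^ (p x) * φ x)) ^ (1 / pminus) := by
  haveI : (ae (volume : Measure (EuclideanSpace ℝ (Fin N)))).NeBot := by
    rw [ae_neBot]
    intro h
    have := isOpen_univ.measure_pos (volume : Measure (EuclideanSpace ℝ (Fin N)))
      Set.univ_nonempty
    rw [h] at this
    simp at this
  have hpp : 1 < pplus := by
    obtain ⟨x, h1, h2⟩ := hpbd.exists
    linarith
  set A : Set (EuclideanSpace ℝ (Fin N)) := {x | |u x| < 1} with hAdef
  have hA : MeasurableSet A := measurableSet_lt hu.abs measurable_const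
  rw [← lintegral_add_compl (fun x => ENNReal.ofReal (|u x| * |g x|)) hA]
  refine add_le_add ?_ ?_
  · refine holder_aux _ u g φ p hu hg hφ hφpos pplus hpp hA ?_
    filter_upwards [hpbd] with x hx hxA
    have hxA' : |u x| < 1 := hxA
    rcases eq_or_lt_of_le (abs_nonneg (u x)) with h0 | h0
    · rw [← h0, Real.zero_rpow (by linarith), Real.zero_rpow (by linarith [hx.1])]
    · exact Real.rpow_le_rpow_of_exponent_ge h0 hxA'.le hx.2
  · refine holder_aux _ u g φ p hu hg hφ hφpos pminus hp1 hA.compl ?_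
    filter_upwards [hpbd] with x hx hxA
    have hxA' : ¬ |u x| < 1 := hxA
    exact Real.rpow_le_rpow_of_exponent_le (not_lt.1 hxA') hx.1
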